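/- (Unitarity property of the Gassner invariant.) Let K be a field, n ≥ 2, t₁,…,t_n ∈ K with t_j ≠ 0 and t_j ≠ 1 for all j, and let c : K → K be a ring homomorphism with c(t_j) = t_j⁻¹ for all j. Let w = ((i₁,s₁),…,(i_k,s_k)) be a braid word on n strands, with associated permutations τ₀,…,τ_k, over-strand indices j₁,…,j_k, and Gassner invariant Γ(w). Then Γ(w) is invertible and Ω(τ_k)·Γ(w)⁻¹ = Γ(w)̄ᵀ·Ω(ι). -/

import Mathlib

open Matrix

/-- `U K n i t` is the `n × n` matrix over `K` (1-indexed rows/columns `1,…,n`) that equals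
the identity matrix except that its `2 × 2` block in rows `i, i+1` and columns `i, i+1`
is `((1-t, 1), (t, 0))`.  A row index `r : Fin n` corresponds to the 1-indexed row `r.val + 1`. -/
def GassnerU (K : Type*) [CommRing K] (n : ℕ) (i : ℕ) (t : K) : Matrix (Fin n) (Fin n) K :=
  Matrix.of fun r c =>
    if r.val + 1 = i ∧ c.val + 1 = i then 1 - t
    else if r.val + 1 = i ∧ c.val = i then 1
    else if r.val = i ∧ c.val + 1 = i then t
    else if r.val = i ∧ c.val = i then 0
    else if r = c then 1 else 0

/-- `Ω(τ)`: the `n × n` matrix with diagonal entries `(1 - t (τ r))⁻¹`, entries below the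
diagonal equal to `1`, and entries above the diagonal equal to `0`. -/
def GassnerOmega {K : Type*} [Field K] {n : ℕ} (t : Fin n → K) (τ : Equiv.Perm (Fin n)) :
    Matrix (Fin n) (Fin n) K :=
  Matrix.of fun r c => if r = c then (1 - t (τ r))⁻¹ else if c < r then 1 else 0

/-- The strand position `i` (1-indexed), as an element of `Fin n`, for a braid generator
index `i` encoded as an element of `Fin (n-1)` (so `i : Fin (n-1)` stands for `σ_{i+1}`,
crossing the strands at 1-indexed positions `i.val + 1` and `i.val + 2`). -/
def strandLo {n : ℕ} (i : Fin (n - 1)) : Fin n := ⟨i.val, by have := i.isLt; omega⟩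

/-- The strand position `i + 1` (1-indexed), as an element of `Fin n`. -/
def strandHi {n : ℕ} (i : Fin (n - 1)) : Fin n := ⟨i.val + 1, by have := i.isLt; omega⟩

/-- A braid word on `n` strands is a list of pairs `(i, s)` where `i : Fin (n-1)` encodes a
generator `σ_{i+1}` and `s : Bool` encodes its sign (`true` for `+1`, `false` for `-1`).
`braidPerm n w` is the permutation of the `n` strands induced by the word `w`
(the product, in order, of the transpositions `(i_α, i_α + 1)`). -/
def braidPerm (n : ℕ) : List (Fin (n - 1) × Bool) → Equiv.Perm (Fin n)
  | [] => 1
  | p :: w => Equiv.swap (strandLo p.1) (strandHi p.1) * braidPerm n w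

/-- The Gassner invariant of a braid word, relative to the permutation `τ` induced by the
braid below it: the ordered product of the matrices `U_{n;i_α}(t_{j_α})^{s_α}`, where `j_α` is
the index of the over strand at crossing `α` (namely `τ_{α-1}(i_α)` for a positive crossing
and `τ_{α-1}(i_α + 1)` for a negative one). -/
noncomputable def gassner {K : Type*} [Field K] {n : ℕ} (t : Fin n → K) :
    Equiv.Perm (Fin n) → List (Fin (n - 1) × Bool) → Matrix (Fin n) (Fin n) K
  | _, [] => 1
  | τ, p :: w =>
      (if p.2 then GassnerU K n (p.1.val + 1) (t (τ (strandLo p.1)))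
       else (GassnerU K n (p.1.val + 1) (t (τ (strandHi p.1))))⁻¹) *
        gassner t (τ * Equiv.swap (strandLo p.1) (strandHi p.1)) w

section GassnerAux

variable {K : Type*} [Field K] {n : ℕ}

lemma lo_lt_hi (i : Fin (n-1)) : strandLo i < strandHi i := by
  simp [strandLo, strandHi, Fin.lt_def]

lemma lo_ne_hi (i : Fin (n-1)) : strandLo i ≠ strandHi i := ne_of_lt (lo_lt_hi i)

lemma GassnerU_apply (i : Fin (n-1)) (t : K) (r c : Fin n) :
    GassnerU K n (i.val+1) t r c =
      if r = strandLo i then (if c = strandLo i then 1 - t else if c = strandHi i then 1 else 0)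
      else if r = strandHi i then (if c = strandLo i then t else 0)
      else if r = c then 1 else 0 := by
  simp only [GassnerU, Matrix.of_apply, strandLo, strandHi, Fin.ext_iff]
  split_ifs <;> first | rfl | (exfalso; omega)

lemma mul_U_apply (M : Matrix (Fin n) (Fin n) K) (i : Fin (n-1)) (t : K) (r c : Fin n) :
    (M * GassnerU K n (i.val+1) t) r c =
      if c = strandLo i then M r (strandLo i) * (1 - t) + M r (strandHi i) * t
      else if c = strandHi i then M r (strandLo i)
      else M r c := by
  rw [Matrix.mul_apply]
  have key : ∀ l, M r l * GassnerU K n (i.val+1) t l c =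
      (if l = strandLo i then (if c = strandLo i then M r (strandLo i) * (1-t)
         else if c = strandHi i then M r (strandLo i) else 0) else 0)
    + (if l = strandHi i then (if c = strandLo i then M r (strandHi i) * t else 0) else 0)
    + (if l = c then (if c = strandLo i ∨ c = strandHi i then 0 else M r c) else 0) := by
    intro l
    rw [GassnerU_apply]
    rcases eq_or_ne l (strandLo i) with h1 | h1 <;>
    rcases eq_or_ne l (strandHi i) with h2 | h2 <;>
    rcases eq_or_ne c (strandLo i) with h3 | h3 <;>
    rcases eq_or_ne c (strandHi i) with h4 | h4 <;>
    rcases eq_or_ne l c with h5 | h5 <;>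
      simp_all [lo_ne_hi i, (lo_ne_hi i).symm]
  simp only [key, Finset.sum_add_distrib, Finset.sum_ite_eq', Finset.mem_univ, if_true]
  rcases eq_or_ne c (strandLo i) with h3 | h3 <;>
  rcases eq_or_ne c (strandHi i) with h4 | h4 <;>
    simp_all [(lo_ne_hi i).symm]

lemma Uc_mul_apply (φ : K →+* K) (M : Matrix (Fin n) (Fin n) K) (i : Fin (n-1)) (t : K)
    (r γ : Fin n) :
    (((GassnerU K n (i.val+1) t).map φ)ᵀ * M) r γ =
      if r = strandLo i then (1 - φ t) * M (strandLo i) γ + φ t * M (strandHi i) γ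
      else if r = strandHi i then M (strandLo i) γ
      else M r γ := by
  rw [Matrix.mul_apply]
  simp only [Matrix.transpose_apply, Matrix.map_apply]
  have key : ∀ k, φ (GassnerU K n (i.val+1) t k r) * M k γ =
      (if k = strandLo i then (if r = strandLo i then (1 - φ t) * M (strandLo i) γ
         else if r = strandHi i then M (strandLo i) γ else 0) else 0)
    + (if k = strandHi i then (if r = strandLo i then φ t * M (strandHi i) γ else 0) else 0)
    + (if k = r then (if r = strandLo i ∨ r = strandHi i then 0 else M r γ) else 0) := by
    intro k
    rw [GassnerU_apply]
    rcases eq_or_ne k (strandLo i) with h1 | h1 <;>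
    rcases eq_or_ne k (strandHi i) with h2 | h2 <;>
    rcases eq_or_ne r (strandLo i) with h3 | h3 <;>
    rcases eq_or_ne r (strandHi i) with h4 | h4 <;>
    rcases eq_or_ne k r with h5 | h5 <;>
      simp_all [lo_ne_hi i, (lo_ne_hi i).symm, map_sub, _root_.map_one]
  simp only [key, Finset.sum_add_distrib, Finset.sum_ite_eq', Finset.mem_univ, if_true]
  rcases eq_or_ne r (strandLo i) with h3 | h3 <;>
  rcases eq_or_ne r (strandHi i) with h4 | h4 <;>
    simp_all [(lo_ne_hi i).symm]

lemma horder (i : Fin (n-1)) : ∀ x : Fin n, x ≠ strandLo i → x ≠ strandHi i →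
    (x < strandLo i ∧ x < strandHi i) ∨ (strandLo i < x ∧ strandHi i < x) := by
  intro x h1 h2
  rw [Ne, Fin.ext_iff] at h1 h2
  simp only [Fin.lt_def, strandLo, strandHi] at *
  omega

lemma keylemma (t : Fin n → K) (ht0 : ∀ j, t j ≠ 0) (ht1 : ∀ j, t j ≠ 1)
    (φ : K →+* K) (hφ : ∀ j, φ (t j) = (t j)⁻¹)
    (τ : Equiv.Perm (Fin n)) (i : Fin (n-1)) :
    ((GassnerU K n (i.val+1) (t (τ (strandLo i)))).map φ)ᵀ * GassnerOmega t τ *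
      GassnerU K n (i.val+1) (t (τ (strandLo i))) =
    GassnerOmega t (τ * Equiv.swap (strandLo i) (strandHi i)) := by
  have hLH := lo_lt_hi i
  have hne := lo_ne_hi i
  have hnlt : ¬ strandHi i < strandLo i := lt_asymm hLH
  have hu0 : t (τ (strandLo i)) ≠ 0 := ht0 _
  have hu1 : (1:K) - t (τ (strandLo i)) ≠ 0 := sub_ne_zero.2 (Ne.symm (ht1 _))
  have hv0 : t (τ (strandHi i)) ≠ 0 := ht0 _
  have hv1 : (1:K) - t (τ (strandHi i)) ≠ 0 := sub_ne_zero.2 (Ne.symm (ht1 _))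
  ext r γ
  rw [mul_U_apply]
  simp only [Uc_mul_apply, hφ]
  simp only [GassnerOmega, Matrix.of_apply, Equiv.Perm.mul_apply]
  rcases eq_or_ne r (strandLo i) with hr1 | hr1
  · subst hr1
    rcases eq_or_ne γ (strandLo i) with hg1 | hg1
    · subst hg1
      simp only [if_pos rfl, hne, hne.symm, hLH, hnlt, if_true, if_false,
        Equiv.swap_apply_left, if_neg]
      field_simp
      ring
    · rcases eq_or_ne γ (strandHi i) with hg2 | hg2
      · subst hg2
        simp only [hne, hne.symm, hLH, hnlt, if_true, if_false, if_pos rfl,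
          Equiv.swap_apply_left, if_neg]
        field_simp
        ring
      · obtain ⟨ha, hb⟩ | ⟨ha, hb⟩ := horder i γ hg1 hg2
        · simp [hg1, hg2, Ne.symm hg1, Ne.symm hg2, ha, hb, hne, hne.symm]
        · simp [hg1, hg2, Ne.symm hg1, Ne.symm hg2, ha.not_gt, hb.not_gt, hne, hne.symm]
  · rcases eq_or_ne r (strandHi i) with hr2 | hr2
    · subst hr2
      rcases eq_or_ne γ (strandLo i) with hg1 | hg1
      · subst hg1
        simp only [hne, hne.symm, hLH, hnlt, if_true, if_false, if_pos rfl, if_neg]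
        field_simp
        ring
      · rcases eq_or_ne γ (strandHi i) with hg2 | hg2
        · subst hg2
          simp only [hne, hne.symm, hLH, hnlt, if_true, if_false, if_pos rfl,
            Equiv.swap_apply_right, if_neg]
        · obtain ⟨ha, hb⟩ | ⟨ha, hb⟩ := horder i γ hg1 hg2
          · simp [hg1, hg2, Ne.symm hg1, Ne.symm hg2, ha, hb, hne, hne.symm]
          · simp [hg1, hg2, Ne.symm hg1, Ne.symm hg2, ha.not_gt, hb.not_gt, hne, hne.symm]
    · obtain ⟨ha, hb⟩ | ⟨ha, hb⟩ := horder i r hr1 hr2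
      · rcases eq_or_ne γ (strandLo i) with hg1 | hg1
        · subst hg1
          simp [hr1, hr2, ha.not_gt, hb.not_gt, Ne.symm hr1, Ne.symm hr2]
        · rcases eq_or_ne γ (strandHi i) with hg2 | hg2
          · subst hg2
            simp [hr1, hr2, ha.not_gt, hb.not_gt, Ne.symm hr1, Ne.symm hr2]
          · simp [hr1, hr2, hg1, hg2, Equiv.swap_apply_of_ne_of_ne hr1 hr2]
      · rcases eq_or_ne γ (strandLo i) with hg1 | hg1
        · subst hg1
          simp [hr1, hr2, ha, hb, Ne.symm hr1, Ne.symm hr2]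
        · rcases eq_or_ne γ (strandHi i) with hg2 | hg2
          · subst hg2
            simp [hr1, hr2, ha, hb, Ne.symm hr1, Ne.symm hr2]
          · simp [hr1, hr2, hg1, hg2, Equiv.swap_apply_of_ne_of_ne hr1 hr2]

def GV (i : Fin (n-1)) (t : K) : Matrix (Fin n) (Fin n) K :=
  Matrix.of fun r c =>
    if r = strandLo i then (if c = strandLo i then 0 else if c = strandHi i then t⁻¹ else 0)
    else if r = strandHi i then
      (if c = strandLo i then 1 else if c = strandHi i then (t-1) * t⁻¹ else 0)
    else if r = c then 1 else 0

lemma GV_mul_U (i : Fin (n-1)) (t : K) (ht : t ≠ 0) :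
    GV i t * GassnerU K n (i.val+1) t = 1 := by
  ext r c
  rw [mul_U_apply]
  simp only [GV, Matrix.of_apply, Matrix.one_apply]
  rcases eq_or_ne r (strandLo i) with hr1|hr1 <;> rcases eq_or_ne r (strandHi i) with hr2|hr2 <;>
  rcases eq_or_ne c (strandLo i) with hc1|hc1 <;> rcases eq_or_ne c (strandHi i) with hc2|hc2 <;>
    simp_all [lo_ne_hi i, (lo_ne_hi i).symm, eq_comm]

lemma isUnit_U (i : Fin (n-1)) (t : K) (ht : t ≠ 0) :
    IsUnit (GassnerU K n (i.val+1) t) :=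
  (Matrix.isUnit_iff_isUnit_det _).2 (Matrix.isUnit_det_of_left_inverse (GV_mul_U i t ht))

lemma U_inv_eq (i : Fin (n-1)) (t : K) (ht : t ≠ 0) :
    (GassnerU K n (i.val+1) t)⁻¹ = GV i t :=
  Matrix.inv_eq_left_inv (GV_mul_U i t ht)

lemma GVc_mul_Uc (φ : K →+* K) (i : Fin (n-1)) (t : K) (ht : t ≠ 0) :
    (GV i t).map φ * (GassnerU K n (i.val+1) t).map φ = 1 := by
  rw [← Matrix.map_mul, GV_mul_U i t ht, Matrix.map_one φ (map_zero φ) (map_one φ)]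

lemma isUnit_Uc (φ : K →+* K) (i : Fin (n-1)) (t : K) (ht : t ≠ 0) :
    IsUnit ((GassnerU K n (i.val+1) t).map φ) :=
  (Matrix.isUnit_iff_isUnit_det _).2
    (Matrix.isUnit_det_of_left_inverse (GVc_mul_Uc φ i t ht))

lemma stepPos (t : Fin n → K) (ht0 : ∀ j, t j ≠ 0) (ht1 : ∀ j, t j ≠ 1)
    (φ : K →+* K) (hφ : ∀ j, φ (t j) = (t j)⁻¹) (τ : Equiv.Perm (Fin n)) (i : Fin (n-1)) :
    IsUnit (GassnerU K n (i.val+1) (t (τ (strandLo i)))) ∧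
    GassnerOmega t (τ * Equiv.swap (strandLo i) (strandHi i)) *
        (GassnerU K n (i.val+1) (t (τ (strandLo i))))⁻¹ =
      ((GassnerU K n (i.val+1) (t (τ (strandLo i)))).map φ)ᵀ * GassnerOmega t τ := by
  have h0 : t (τ (strandLo i)) ≠ 0 := ht0 _
  refine ⟨isUnit_U i _ h0, ?_⟩
  rw [← keylemma t ht0 ht1 φ hφ τ i,
    Matrix.mul_nonsing_inv_cancel_right _ _ (Matrix.isUnit_det_of_left_inverse (GV_mul_U i _ h0))]

lemma stepNeg (t : Fin n → K) (ht0 : ∀ j, t j ≠ 0) (ht1 : ∀ j, t j ≠ 1)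
    (φ : K →+* K) (hφ : ∀ j, φ (t j) = (t j)⁻¹) (τ : Equiv.Perm (Fin n)) (i : Fin (n-1)) :
    IsUnit ((GassnerU K n (i.val+1) (t (τ (strandHi i))))⁻¹) ∧
    GassnerOmega t (τ * Equiv.swap (strandLo i) (strandHi i)) *
        ((GassnerU K n (i.val+1) (t (τ (strandHi i))))⁻¹)⁻¹ =
      (((GassnerU K n (i.val+1) (t (τ (strandHi i))))⁻¹).map φ)ᵀ * GassnerOmega t τ := by
  have h0 : t (τ (strandHi i)) ≠ 0 := ht0 _
  set U' := GassnerU K n (i.val+1) (t (τ (strandHi i))) with hU'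
  have hdet : IsUnit U'.det := Matrix.isUnit_det_of_left_inverse (GV_mul_U i _ h0)
  have hKey := keylemma t ht0 ht1 φ hφ (τ * Equiv.swap (strandLo i) (strandHi i)) i
  simp only [Equiv.Perm.mul_apply, Equiv.swap_apply_left] at hKey
  rw [show τ * Equiv.swap (strandLo i) (strandHi i) * Equiv.swap (strandLo i) (strandHi i) = τ by
    rw [mul_assoc, Equiv.swap_mul_self, mul_one]] at hKey
  -- hKey : (U'.map φ)ᵀ * Ω(τ*s) * U' = Ω(τ)
  constructor
  · rw [U_inv_eq i _ h0]
    exact (Matrix.isUnit_iff_isUnit_det _).2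
      (Matrix.isUnit_det_of_right_inverse (GV_mul_U i _ h0))
  · rw [Matrix.nonsing_inv_nonsing_inv _ hdet]
    have hmapinv : U'⁻¹.map φ = (U'.map φ)⁻¹ := by
      rw [U_inv_eq i _ h0, Matrix.inv_eq_left_inv (GVc_mul_Uc φ i _ h0)]
    rw [hmapinv, Matrix.transpose_nonsing_inv, ← hKey, Matrix.mul_assoc]
    have hdetc : IsUnit ((U'.map φ)ᵀ).det := by
      rw [Matrix.det_transpose]
      exact Matrix.isUnit_det_of_left_inverse (GVc_mul_Uc φ i _ h0)
    rw [Matrix.nonsing_inv_mul_cancel_left _ _ hdetc]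

lemma gassner_main (t : Fin n → K) (ht0 : ∀ j, t j ≠ 0) (ht1 : ∀ j, t j ≠ 1)
    (φ : K →+* K) (hφ : ∀ j, φ (t j) = (t j)⁻¹) (w : List (Fin (n - 1) × Bool)) :
    ∀ τ : Equiv.Perm (Fin n),
      IsUnit (gassner t τ w) ∧
      GassnerOmega t (τ * braidPerm n w) * (gassner t τ w)⁻¹ =
        ((gassner t τ w).map φ)ᵀ * GassnerOmega t τ := by
  induction w with
  | nil =>
      intro τ
      refine ⟨isUnit_one, ?_⟩
      show GassnerOmega t (τ * 1) * (1 : Matrix (Fin n) (Fin n) K)⁻¹ =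
        ((1 : Matrix (Fin n) (Fin n) K).map φ)ᵀ * GassnerOmega t τ
      rw [mul_one, inv_one, mul_one,
        Matrix.map_one φ (map_zero φ) (map_one φ), Matrix.transpose_one, one_mul]
  | cons p w ih =>
      intro τ
      obtain ⟨i, b⟩ := p
      obtain ⟨hG, hGeq⟩ := ih (τ * Equiv.swap (strandLo i) (strandHi i))
      have hstep :
          IsUnit (if b then GassnerU K n (i.val + 1) (t (τ (strandLo i)))
            else (GassnerU K n (i.val + 1) (t (τ (strandHi i))))⁻¹) ∧
          GassnerOmega t (τ * Equiv.swap (strandLo i) (strandHi i)) *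
              (if b then GassnerU K n (i.val + 1) (t (τ (strandLo i)))
                else (GassnerU K n (i.val + 1) (t (τ (strandHi i))))⁻¹)⁻¹ =
            (((if b then GassnerU K n (i.val + 1) (t (τ (strandLo i)))
                else (GassnerU K n (i.val + 1) (t (τ (strandHi i))))⁻¹)).map φ)ᵀ *
              GassnerOmega t τ := by
        cases b
        · simpa using stepNeg t ht0 ht1 φ hφ τ i
        · simpa using stepPos t ht0 ht1 φ hφ τ i
      obtain ⟨hA, hAeq⟩ := hstep
      have hgdef : gassner t τ ((i, b) :: w) =
          (if b then GassnerU K n (i.val + 1) (t (τ (strandLo i)))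
            else (GassnerU K n (i.val + 1) (t (τ (strandHi i))))⁻¹) *
          gassner t (τ * Equiv.swap (strandLo i) (strandHi i)) w := rfl
      have hbp : braidPerm n ((i, b) :: w) =
          Equiv.swap (strandLo i) (strandHi i) * braidPerm n w := rfl
      refine ⟨by rw [hgdef]; exact hA.mul hG, ?_⟩
      rw [hgdef, hbp, Matrix.mul_inv_rev, ← mul_assoc τ, ← Matrix.mul_assoc, hGeq,
        Matrix.mul_assoc, hAeq, ← Matrix.mul_assoc, ← Matrix.transpose_mul, ← Matrix.map_mul]

end GassnerAux

/-- Unitarity property of the Gassner invariant: for any braid word `w` on `n` strands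
inducing the strand permutation `τ_k = braidPerm n w`, the Gassner invariant
`Γ(w) = gassner t 1 w` is invertible and satisfies `Ω(τ_k)·Γ(w)⁻¹ = Γ(w)̄ᵀ·Ω(ι)`,
where the bar is the entrywise application of the ring homomorphism `c`
(which satisfies `c (t_j) = t_j⁻¹`). -/
theorem gassner_unitarity {K : Type*} [Field K] (n : ℕ) (hn : 2 ≤ n)
    (t : Fin n → K) (ht0 : ∀ j, t j ≠ 0) (ht1 : ∀ j, t j ≠ 1)
    (c : K →+* K) (hc : ∀ j, c (t j) = (t j)⁻¹)
    (w : List (Fin (n - 1) × Bool)) :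
    IsUnit (gassner t 1 w) ∧
      GassnerOmega t (braidPerm n w) * (gassner t 1 w)⁻¹ =
        ((gassner t 1 w).map c)ᵀ * GassnerOmega t 1 := by
  obtain ⟨h1, h2⟩ := gassner_main t ht0 ht1 c hc w 1
  rw [one_mul] at h2
  exact ⟨h1, h2⟩
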